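/- The 5×10 integer matrix 𝒜 = [I₅ | D], where I₅ is the 5×5 identity matrix and D is the 5×5 integer matrix with D_{jj} = 1, D_{jk} = -1 when j − k ≡ ±1 (mod 5), and D_{jk} = 0 otherwise, is totally unimodular; that is, every square submatrix of 𝒜 has determinant in {−1, 0, 1}. -/

import Mathlib

open Matrix

set_option maxRecDepth 20000

/-- The 5×5 integer matrix `D` with `D j k = 1` if `j = k`, `-1` if `j - k ≡ ±1 (mod 5)`,
and `0` otherwise. -/
def Dmat : Matrix (Fin 5) (Fin 5) ℤ := fun j k =>
  if j = k then 1
  else if (j : ZMod 5) - (k : ZMod 5) = 1 ∨ (j : ZMod 5) - (k : ZMod 5) = -1 then -1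
  else 0

/-- The 5×10 matrix `𝒜 = [I₅ | D]` (columns indexed by `Fin 5 ⊕ Fin 5`). -/
def Amat : Matrix (Fin 5) (Fin 5 ⊕ Fin 5) ℤ :=
  Matrix.fromCols 1 Dmat

lemma char5 (f : Fin 5 → Fin 5) (hf : StrictMono f) : f = id := by
  have hsurj : Function.Surjective f := Finite.surjective_of_injective hf.injective
  have h : Set.range f = Set.range (id : Fin 5 → Fin 5) := by
    rw [Set.range_id, Set.range_eq_univ]; exact hsurj
  exact (StrictMono.range_inj hf strictMono_id).mp h

lemma char4 (f : Fin 4 → Fin 5) (hf : StrictMono f) : ∃ i : Fin 5, f = Fin.succAbove i := by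
  have hns : ¬ Function.Surjective f := by
    intro h
    have := Fintype.card_le_of_surjective f h
    simp at this
  rw [Function.Surjective] at hns
  push_neg at hns
  obtain ⟨i, hi⟩ := hns
  refine ⟨i, (StrictMono.range_inj hf (Fin.strictMono_succAbove i)).mp ?_⟩
  rw [Fin.range_succAbove]
  have hsub : Set.range f ⊆ ({i} : Set (Fin 5))ᶜ := by
    rintro x ⟨a, rfl⟩
    simp only [Set.mem_compl_iff, Set.mem_singleton_iff]
    intro h
    exact hi a h
  have hfin : Set.range f = ↑(Finset.univ.image f) := by
    simp
  have hcompl : (({i} : Set (Fin 5))ᶜ) = ↑(({i} : Finset (Fin 5))ᶜ) := by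
    simp
  rw [hfin, hcompl] at hsub ⊢
  norm_cast at hsub ⊢
  apply Finset.eq_of_subset_of_card_le hsub
  rw [Finset.card_image_of_injective _ hf.injective, Finset.card_compl]
  simp

lemma key : ∀ (k : ℕ) (f g : Fin k → Fin 5), StrictMono f → StrictMono g →
    ((Dmat.submatrix f g).det = -1 ∨ (Dmat.submatrix f g).det = 0 ∨
      (Dmat.submatrix f g).det = 1)
  | 0 => by decide
  | 1 => by decide
  | 2 => by decide
  | 3 => by decide
  | 4 => by
      intro f g hf hg
      obtain ⟨i, rfl⟩ := char4 f hf
      obtain ⟨j, rfl⟩ := char4 g hg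
      revert i j
      decide
  | 5 => by
      intro f g hf hg
      rw [char5 f hf, char5 g hg]
      decide
  | (n + 6) => by
      intro f g hf _
      exact absurd (Fintype.card_le_of_injective f hf.injective) (by simp)

lemma keyInj (k : ℕ) (f g : Fin k → Fin 5) (hf : Function.Injective f)
    (hg : Function.Injective g) :
    ((Dmat.submatrix f g).det = -1 ∨ (Dmat.submatrix f g).det = 0 ∨
      (Dmat.submatrix f g).det = 1) := by
  set σ := Tuple.sort f with hσ
  set τ := Tuple.sort g with hτ
  have hfm : StrictMono (f ∘ σ) :=
    (Tuple.monotone_sort f).strictMono_of_injective (hf.comp σ.injective)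
  have hgm : StrictMono (g ∘ τ) :=
    (Tuple.monotone_sort g).strictMono_of_injective (hg.comp τ.injective)
  have hK := key k (f ∘ σ) (g ∘ τ) hfm hgm
  have hsub : Dmat.submatrix (f ∘ σ) (g ∘ τ)
      = (((Dmat.submatrix f g).submatrix id τ).submatrix σ id) := by
    simp [Matrix.submatrix_submatrix]
  rw [hsub, Matrix.det_permute, Matrix.det_permute'] at hK
  rcases Int.units_eq_one_or (Equiv.Perm.sign σ) with h1 | h1 <;>
    rcases Int.units_eq_one_or (Equiv.Perm.sign τ) with h2 | h2 <;>
      rw [h1, h2] at hK <;> simp at hK <;> omega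

lemma Dmat_tu : Dmat.IsTotallyUnimodular := by
  intro k f g hf hg
  rcases keyInj k f g hf hg with h | h | h
  · exact ⟨SignType.neg, by rw [h]; simp⟩
  · exact ⟨SignType.zero, by rw [h]; simp⟩
  · exact ⟨SignType.pos, by rw [h]; simp⟩

/-- `𝒜 = [I₅ | D]` is totally unimodular: every square submatrix has
determinant in `{-1, 0, 1}`. -/
theorem stmt_0 :
    ∀ (k : ℕ) (f : Fin k → Fin 5) (g : Fin k → Fin 5 ⊕ Fin 5),
      Function.Injective f → Function.Injective g →
        (Amat.submatrix f g).det ∈ ({-1, 0, 1} : Set ℤ) := by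
  have hA : Amat.IsTotallyUnimodular :=
    (Matrix.one_fromCols_isTotallyUnimodular_iff Dmat).mpr Dmat_tu
  intro k f g hf hg
  obtain ⟨s, hs⟩ := hA k f g hf hg
  rw [← hs]
  cases s <;> simp
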